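/- Let G be a width-stable s-t DAG with width(G) ≥ 2. For any flow X : E → ℕ, the greedy-weight algorithm (repeatedly removing a heaviest s-t path with its maximum carryable weight) decomposes X using at most ⌊log |X| / log(width(G)/(width(G)−1))⌋ + 1 paths, where |X| is the total flow out of s. -/

import Mathlib

open Finset

def IsWalk {V E : Type} (src tgt : E → V) : V → V → List E → Prop
  | a, b, [] => a = b
  | a, b, e :: L => src e = a ∧ IsWalk src tgt (tgt e) b L

def IsPath {V E : Type} (src tgt : E → V) (s t : V) (L : List E) : Prop :=
  L ≠ [] ∧ IsWalk src tgt s t L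

def IsDAG {V E : Type} (src tgt : E → V) : Prop :=
  ∀ (v : V) (L : List E), L ≠ [] → ¬ IsWalk src tgt v v L

/-- Width of the subgraph on the edge set `S`: the minimum number of `s`-`t` paths
using only edges of `S` and covering all edges of `S`. -/
noncomputable def widthIn {V E : Type} [Fintype E] (src tgt : E → V) (s t : V)
    (S : Set E) : ℕ :=
  sInf {k | ∃ P : Fin k → List E,
    (∀ i, IsPath src tgt s t (P i) ∧ ∀ e ∈ P i, e ∈ S) ∧ ∀ e ∈ S, ∃ i, e ∈ P i}

def IsFlowN {V E : Type} [Fintype E] [DecidableEq V] (src tgt : E → V) (s t : V)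
    (X : E → ℕ) : Prop :=
  ∀ v : V, v ≠ s → v ≠ t →
    (∑ e, if tgt e = v then X e else 0) = ∑ e, if src e = v then X e else 0

/-- Total flow out of the source `s`. -/
def flowValue {V E : Type} [Fintype E] [DecidableEq V] (src : E → V) (s : V)
    (X : E → ℕ) : ℕ :=
  ∑ e, if src e = s then X e else 0

/-- `G` is width-stable: the width of the support subgraph is monotone in the flow. -/
def WidthStable {V E : Type} [Fintype E] [DecidableEq V] (src tgt : E → V)
    (s t : V) : Prop :=
  ∀ X Y : E → ℕ, IsFlowN src tgt s t X → IsFlowN src tgt s t Y → (∀ e, X e ≤ Y e) →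
    widthIn src tgt s t {e | X e ≠ 0} ≤ widthIn src tgt s t {e | Y e ≠ 0}


section Aux
variable {V E : Type} {src tgt : E → V}

lemma IsWalk.append {a b c : V} {L₁ L₂ : List E}
    (h₁ : IsWalk src tgt a b L₁) (h₂ : IsWalk src tgt b c L₂) :
    IsWalk src tgt a c (L₁ ++ L₂) := by
  induction L₁ generalizing a with
  | nil => have : a = b := h₁; subst this; simpa using h₂
  | cons e L ih => exact ⟨h₁.1, ih h₁.2⟩

lemma isWalk_split {a c : V} {e : E} {L₁ L₂ : List E}
    (h : IsWalk src tgt a c (L₁ ++ e :: L₂)) :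
    IsWalk src tgt a (src e) L₁ ∧ IsWalk src tgt (tgt e) c L₂ := by
  induction L₁ generalizing a with
  | nil => exact ⟨h.1.symm, h.2⟩
  | cons f L ih =>
    obtain ⟨h1, h2⟩ := h
    obtain ⟨ha, hb⟩ := ih h2
    exact ⟨⟨h1, ha⟩, hb⟩

lemma IsWalk.nodup (hdag : IsDAG src tgt) {a b : V} {L : List E}
    (h : IsWalk src tgt a b L) : L.Nodup := by
  induction L generalizing a with
  | nil => exact List.nodup_nil
  | cons e L ih =>
    obtain ⟨he, hL⟩ := h
    refine List.nodup_cons.mpr ⟨?_, ih hL⟩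
    intro hmem
    obtain ⟨l₁, l₂, rfl⟩ := List.append_of_mem hmem
    exact hdag (src e) (e :: l₁) (by simp) ⟨rfl, (isWalk_split hL).1⟩

lemma IsWalk.countP_int [DecidableEq V] {a b : V} {L : List E}
    (h : IsWalk src tgt a b L) (v : V) :
    (L.countP (fun f => decide (src f = v)) : ℤ) -
      (L.countP (fun f => decide (tgt f = v)) : ℤ)
      = (if a = v then 1 else 0) - (if b = v then 1 else 0) := by
  induction L generalizing a with
  | nil => have : a = b := h; subst this; simp
  | cons e L ih =>
    obtain ⟨he, hL⟩ := h
    have H := ih hL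
    rw [List.countP_cons, List.countP_cons]
    subst he
    push_cast
    simp only [decide_eq_true_eq]
    split_ifs at H ⊢ <;> omega

/-- No edge with source `s` after the start (uses `hs : no edge enters s`). -/
lemma countP_src_eq_zero [DecidableEq V] (hs : ∀ e, tgt e ≠ s) {a b : V} {L : List E}
    (h : IsWalk src tgt a b L) (ha : a ≠ s) :
    L.countP (fun f => decide (src f = s)) = 0 := by
  induction L generalizing a with
  | nil => simp
  | cons e L ih =>
    obtain ⟨he, hL⟩ := h
    rw [List.countP_cons]
    have h1 := ih hL (hs e)
    simp only [decide_eq_true_eq]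
    rw [if_neg (by rw [he]; exact ha)]
    omega

lemma countP_src_eq_one [DecidableEq V] (hs : ∀ e, tgt e ≠ s) {b : V} {L : List E}
    (hne : L ≠ []) (h : IsWalk src tgt s b L) :
    L.countP (fun f => decide (src f = s)) = 1 := by
  cases L with
  | nil => exact absurd rfl hne
  | cons e L =>
    obtain ⟨he, hL⟩ := h
    rw [List.countP_cons, countP_src_eq_zero hs hL (hs e)]
    simp [he]

end Aux

section Sums
variable {V E : Type} [Fintype E] [DecidableEq E] [DecidableEq V] {src tgt : E → V} {s t : V}

lemma sum_count (p : E → Prop) [DecidablePred p] (L : List E) :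
    (∑ e, if p e then L.count e else 0) = L.countP (fun e => decide (p e)) := by
  induction L with
  | nil => simp
  | cons x L ih =>
    rw [List.countP_cons]
    have h1 : ∀ e, (if p e then (x :: L).count e else 0)
        = (if p e then L.count e else 0) + (if x = e then (if p e then 1 else 0) else 0) := by
      intro e
      rw [List.count_cons]
      split_ifs with h h2 h2 <;> simp_all <;> try omega
    rw [Finset.sum_congr rfl (fun e _ => h1 e), Finset.sum_add_distrib, ih,
      Finset.sum_ite_eq Finset.univ x (fun e => if p e then 1 else 0)]
    simp only [Finset.mem_univ, if_true, decide_eq_true_eq]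

lemma sum_if_mem (p : E → Prop) [DecidablePred p] {L : List E} (hL : L.Nodup) (c : ℕ) :
    (∑ e, if p e then (if e ∈ L then c else 0) else 0)
      = c * L.countP (fun e => decide (p e)) := by
  have h1 : ∀ e, (if p e then (if e ∈ L then c else 0) else 0)
      = c * (if p e then L.count e else 0) := by
    intro e
    by_cases h : e ∈ L
    · rw [List.count_eq_one_of_mem hL h]; split_ifs <;> simp
    · rw [List.count_eq_zero_of_not_mem h]; split_ifs <;> simp
  rw [Finset.sum_congr rfl (fun e _ => h1 e), ← Finset.mul_sum, sum_count]

end Sums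

section Flows
variable {V E : Type} [Fintype E] [DecidableEq E] [DecidableEq V] {src tgt : E → V} {s t : V}

lemma sum_pos_term {f : E → ℕ} (h : 0 < ∑ e, f e) : ∃ e, 0 < f e := by
  by_contra hc
  push_neg at hc
  have : ∀ e ∈ Finset.univ, f e = 0 := fun e _ => Nat.le_zero.mp (hc e)
  rw [Finset.sum_congr rfl this] at h
  simp at h

lemma countP_eq_of_walk {L : List E} {v : V} (hwalk : IsWalk src tgt s t L)
    (hvs : v ≠ s) (hvt : v ≠ t) :
    L.countP (fun f => decide (tgt f = v)) = L.countP (fun f => decide (src f = v)) := by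
  have := hwalk.countP_int v
  rw [if_neg (fun h => hvs h.symm), if_neg (fun h => hvt h.symm)] at this
  omega

lemma sum_if_sub (p : E → Prop) [DecidablePred p] (Z c' : E → ℕ) (h : ∀ e, c' e ≤ Z e) :
    (∑ e, if p e then (Z e - c' e) else 0)
      = (∑ e, if p e then Z e else 0) - (∑ e, if p e then c' e else 0) := by
  have h2 : ∀ e, (if p e then Z e - c' e else 0)
      = (if p e then Z e else 0) - (if p e then c' e else 0) := by
    intro e; split_ifs <;> simp
  rw [Finset.sum_congr rfl fun e _ => h2 e]
  exact Finset.sum_tsub_distrib _ (fun e _ => by split_ifs with hh <;> simp [h e])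

/-- subtracting `c` along an `s`-`t` path preserves flows -/
lemma flow_sub_path {Z : E → ℕ} (hZ : IsFlowN src tgt s t Z)
    {L : List E} (hnd : L.Nodup) (hwalk : IsWalk src tgt s t L)
    {c : ℕ} (hc : ∀ e ∈ L, c ≤ Z e) :
    IsFlowN src tgt s t (fun e => Z e - if e ∈ L then c else 0) := by
  intro v hvs hvt
  have hle : ∀ e, (if e ∈ L then c else 0) ≤ Z e := by
    intro e; split_ifs with h
    · exact hc e h
    · simp
  show (∑ e, if tgt e = v then (Z e - if e ∈ L then c else 0) else 0)
      = (∑ e, if src e = v then (Z e - if e ∈ L then c else 0) else 0)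
  rw [sum_if_sub _ _ _ hle, sum_if_sub _ _ _ hle,
    sum_if_mem (fun e => tgt e = v) hnd, sum_if_mem (fun e => src e = v) hnd,
    hZ v hvs hvt, countP_eq_of_walk hwalk hvs hvt]

lemma flow_sub_path_value (hs : ∀ e, tgt e ≠ s) {Z : E → ℕ}
    {L : List E} (hnd : L.Nodup) (hne : L ≠ []) (hwalk : IsWalk src tgt s t L)
    {c : ℕ} (hc : ∀ e ∈ L, c ≤ Z e) :
    flowValue src s (fun e => Z e - if e ∈ L then c else 0) = flowValue src s Z - c
      ∧ c ≤ flowValue src s Z := by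
  obtain ⟨e₀, L', rfl⟩ : ∃ e₀ L', L = e₀ :: L' := by
    cases L with
    | nil => exact absurd rfl hne
    | cons a b => exact ⟨a, b, rfl⟩
  have hsrc : src e₀ = s := hwalk.1
  have hle : ∀ e, (if e ∈ e₀ :: L' then c else 0) ≤ Z e := by
    intro e; split_ifs with h
    · exact hc e h
    · simp
  have hval : c ≤ flowValue src s Z := by
    have h1 : c ≤ (if src e₀ = s then Z e₀ else 0) := by
      rw [if_pos hsrc]; exact hc e₀ (by simp)
    exact h1.trans (Finset.single_le_sum (f := fun e => if src e = s then Z e else 0)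
      (fun e _ => Nat.zero_le _) (Finset.mem_univ e₀))
  refine ⟨?_, hval⟩
  show (∑ e, if src e = s then (Z e - if e ∈ e₀ :: L' then c else 0) else 0) = _
  rw [sum_if_sub _ _ _ hle, sum_if_mem (fun e => src e = s) hnd,
    countP_src_eq_one hs hne hwalk, mul_one]
  rfl

lemma flow_counts {ι : Type*} {C : Finset ι} {r : ι → List E}
    (hr : ∀ e ∈ C, IsWalk src tgt s t (r e)) :
    IsFlowN src tgt s t (fun f => ∑ e ∈ C, (r e).count f) := by
  intro v hvs hvt
  have key : ∀ p : E → Prop, ∀ _ : DecidablePred p,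
      (∑ f, if p f then (∑ e ∈ C, (r e).count f) else 0)
        = ∑ e ∈ C, (r e).countP (fun f => decide (p f)) := by
    intro p _
    have h1 : ∀ f, (if p f then (∑ e ∈ C, (r e).count f) else 0)
        = ∑ e ∈ C, (if p f then (r e).count f else 0) := by
      intro f; split_ifs <;> simp
    rw [Finset.sum_congr rfl (fun f _ => h1 f), Finset.sum_comm]
    exact Finset.sum_congr rfl (fun e _ => sum_count p (r e))
  rw [key _ _, key _ _]
  exact Finset.sum_congr rfl (fun e he => countP_eq_of_walk (hr e he) hvs hvt)

lemma flow_add {Z W : E → ℕ} (hZ : IsFlowN src tgt s t Z) (hW : IsFlowN src tgt s t W) :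
    IsFlowN src tgt s t (fun e => Z e + W e) := by
  intro v hvs hvt
  have : ∀ p : E → Prop, ∀ _ : DecidablePred p,
      (∑ e, if p e then Z e + W e else 0)
        = (∑ e, if p e then Z e else 0) + (∑ e, if p e then W e else 0) := by
    intro p _
    rw [← Finset.sum_add_distrib]
    exact Finset.sum_congr rfl fun e _ => by split_ifs <;> simp
  rw [this _ _, this _ _, hZ v hvs hvt, hW v hvs hvt]

lemma flow_smul {Z : E → ℕ} (hZ : IsFlowN src tgt s t Z) (M : ℕ) :
    IsFlowN src tgt s t (fun e => M * Z e) := by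
  intro v hvs hvt
  have : ∀ p : E → Prop, ∀ _ : DecidablePred p,
      (∑ e, if p e then M * Z e else 0) = M * (∑ e, if p e then Z e else 0) := by
    intro p _
    rw [Finset.mul_sum]
    exact Finset.sum_congr rfl fun e _ => by split_ifs <;> simp
  rw [this _ _, this _ _, hZ v hvs hvt]

lemma back_walk (hdag : IsDAG src tgt) (hs : ∀ e, tgt e ≠ s) (ht : ∀ e, src e ≠ t)
    {Z : E → ℕ} (hZ : IsFlowN src tgt s t Z) :
    ∀ (n : ℕ) (v c : V) (W : List E), IsWalk src tgt v c W → (∀ f ∈ W, 0 < Z f) →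
      W ≠ [] → Fintype.card E ≤ W.length + n → ∃ e, src e = s ∧ 0 < Z e := by
  intro n
  induction n with
  | zero =>
    intro v c W hW hpos hne hcard
    have := (hW.nodup hdag).length_le_card
    -- extend anyway to derive contradiction or v = s
    by_cases hvs : v = s
    · subst hvs
      obtain ⟨e₀, W', rfl⟩ : ∃ e₀ W', W = e₀ :: W' := by
        cases W with
        | nil => exact absurd rfl hne
        | cons a b => exact ⟨a, b, rfl⟩
      exact ⟨e₀, hW.1, hpos e₀ (by simp)⟩
    · exfalso
      obtain ⟨e₀, W', rfl⟩ : ∃ e₀ W', W = e₀ :: W' := by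
        cases W with
        | nil => exact absurd rfl hne
        | cons a b => exact ⟨a, b, rfl⟩
      have hvt : v ≠ t := hW.1 ▸ ht e₀
      have hcons := hZ v hvs hvt
      have hpos2 : 0 < ∑ e, if src e = v then Z e else 0 := by
        have h1 : 0 < (if src e₀ = v then Z e₀ else 0) := by
          rw [if_pos hW.1]; exact hpos e₀ (by simp)
        exact h1.trans_le (Finset.single_le_sum
          (f := fun e => if src e = v then Z e else 0)
          (fun e _ => Nat.zero_le _) (Finset.mem_univ e₀))
      rw [← hcons] at hpos2
      obtain ⟨e, he⟩ := sum_pos_term hpos2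
      have htgt : tgt e = v := by by_contra h; rw [if_neg h] at he; exact absurd he (lt_irrefl 0)
      have hZe : 0 < Z e := by rwa [if_pos htgt] at he
      have hW2 : IsWalk src tgt (src e) c (e :: (e₀ :: W')) := ⟨rfl, htgt ▸ hW⟩
      have := (hW2.nodup hdag).length_le_card
      simp only [List.length_cons] at this hcard
      omega
  | succ n ih =>
    intro v c W hW hpos hne hcard
    by_cases hvs : v = s
    · subst hvs
      obtain ⟨e₀, W', rfl⟩ : ∃ e₀ W', W = e₀ :: W' := by
        cases W with
        | nil => exact absurd rfl hne
        | cons a b => exact ⟨a, b, rfl⟩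
      exact ⟨e₀, hW.1, hpos e₀ (by simp)⟩
    · obtain ⟨e₀, W', rfl⟩ : ∃ e₀ W', W = e₀ :: W' := by
        cases W with
        | nil => exact absurd rfl hne
        | cons a b => exact ⟨a, b, rfl⟩
      have hvt : v ≠ t := hW.1 ▸ ht e₀
      have hcons := hZ v hvs hvt
      have hpos2 : 0 < ∑ e, if src e = v then Z e else 0 := by
        have h1 : 0 < (if src e₀ = v then Z e₀ else 0) := by
          rw [if_pos hW.1]; exact hpos e₀ (by simp)
        exact h1.trans_le (Finset.single_le_sum
          (f := fun e => if src e = v then Z e else 0)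
          (fun e _ => Nat.zero_le _) (Finset.mem_univ e₀))
      rw [← hcons] at hpos2
      obtain ⟨e, he⟩ := sum_pos_term hpos2
      have htgt : tgt e = v := by by_contra h; rw [if_neg h] at he; exact absurd he (lt_irrefl 0)
      have hZe : 0 < Z e := by rwa [if_pos htgt] at he
      refine ih (src e) c (e :: (e₀ :: W')) ⟨rfl, htgt ▸ hW⟩ ?_ (by simp) ?_
      · intro f hf
        rcases List.mem_cons.mp hf with h | h
        · subst h; exact hZe
        · exact hpos f h
      · simp only [List.length_cons] at hcard ⊢
        omega

lemma flowValue_pos (hdag : IsDAG src tgt) (hs : ∀ e, tgt e ≠ s) (ht : ∀ e, src e ≠ t)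
    {Z : E → ℕ} (hZ : IsFlowN src tgt s t Z) {e₀ : E} (h : Z e₀ ≠ 0) :
    0 < flowValue src s Z := by
  obtain ⟨e, hes, hZe⟩ := back_walk hdag hs ht hZ (Fintype.card E) (src e₀) (tgt e₀)
    [e₀] ⟨rfl, rfl⟩ (by simpa using Nat.pos_of_ne_zero h) (by simp) (by simp)
  have h1 : 0 < (if src e = s then Z e else 0) := by rw [if_pos hes]; exact hZe
  exact h1.trans_le (Finset.single_le_sum (f := fun e => if src e = s then Z e else 0)
    (fun e _ => Nat.zero_le _) (Finset.mem_univ e))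

end Flows

section Cut
variable {V E : Type} [Fintype E] [DecidableEq E] [DecidableEq V] {src tgt : E → V} {s t : V}

lemma cut_value (hs : ∀ e, tgt e ≠ s) {Z : E → ℕ} (hZ : IsFlowN src tgt s t Z)
    (U : V → Prop) [DecidablePred U] (hsU : U s) (htU : ¬ U t) :
    (flowValue src s Z : ℤ) = (∑ e, if U (src e) ∧ ¬ U (tgt e) then (Z e : ℤ) else 0)
      - (∑ e, if ¬ U (src e) ∧ U (tgt e) then (Z e : ℤ) else 0) := by
  classical
  set χ : V → ℤ := fun v => if U v then 1 else 0 with hχ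
  set out : V → ℤ := fun v => ∑ e, if src e = v then (Z e : ℤ) else 0 with hout
  set inn : V → ℤ := fun v => ∑ e, if tgt e = v then (Z e : ℤ) else 0 with hinn
  set W : Finset V := (Finset.univ.image src ∪ Finset.univ.image tgt) with hW
  have hsrcW : ∀ e : E, src e ∈ W := fun e =>
    Finset.mem_union_left _ (Finset.mem_image_of_mem src (Finset.mem_univ e))
  have htgtW : ∀ e : E, tgt e ∈ W := fun e =>
    Finset.mem_union_right _ (Finset.mem_image_of_mem tgt (Finset.mem_univ e))
  have key : ∀ f : E → V, (∀ e, f e ∈ W) →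
      (∑ e, χ (f e) * (Z e : ℤ)) = ∑ v ∈ W, χ v * (∑ e, if f e = v then (Z e : ℤ) else 0) := by
    intro f hf
    have h1 : ∀ e : E, χ (f e) * (Z e : ℤ)
        = ∑ v ∈ W, (if f e = v then χ v * (Z e : ℤ) else 0) := by
      intro e
      rw [Finset.sum_ite_eq W (f e) (fun v => χ v * (Z e : ℤ)), if_pos (hf e)]
    rw [Finset.sum_congr rfl fun e _ => h1 e, Finset.sum_comm]
    refine Finset.sum_congr rfl fun v _ => ?_
    rw [Finset.mul_sum]
    refine Finset.sum_congr rfl fun e _ => ?_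
    split_ifs <;> ring
  have step1 : (∑ e, if U (src e) ∧ ¬ U (tgt e) then (Z e : ℤ) else 0)
      - (∑ e, if ¬ U (src e) ∧ U (tgt e) then (Z e : ℤ) else 0)
      = ∑ e, (χ (src e) - χ (tgt e)) * (Z e : ℤ) := by
    rw [← Finset.sum_sub_distrib]
    refine Finset.sum_congr rfl fun e _ => ?_
    simp only [hχ]
    split_ifs <;> (try ring) <;> tauto
  have step2 : (∑ e, (χ (src e) - χ (tgt e)) * (Z e : ℤ))
      = ∑ v ∈ W, χ v * (out v - inn v) := by
    have : ∀ e : E, (χ (src e) - χ (tgt e)) * (Z e : ℤ)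
        = χ (src e) * (Z e : ℤ) - χ (tgt e) * (Z e : ℤ) := fun e => by ring
    rw [Finset.sum_congr rfl fun e _ => this e, Finset.sum_sub_distrib,
      key src hsrcW, key tgt htgtW, ← Finset.sum_sub_distrib]
    exact Finset.sum_congr rfl fun v _ => by ring
  have hz : ∀ v ∈ W, v ≠ s → χ v * (out v - inn v) = 0 := by
    intro v _ hv
    by_cases hvt : v = t
    · subst hvt
      simp [hχ, htU]
    · have hcons := hZ v hv hvt
      have cast1 : ∀ (p : E → Prop) (_ : DecidablePred p),
          (∑ e, if p e then (Z e : ℤ) else 0) = ((∑ e, if p e then Z e else 0 : ℕ) : ℤ) := by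
        intro p _
        push_cast
        exact Finset.sum_congr rfl fun e _ => by split_ifs <;> simp
      have : inn v = out v := by
        simp only [hinn, hout]
        rw [cast1 _ _, cast1 _ _]
        exact_mod_cast hcons
      rw [this]
      ring
  have hinn_s : inn s = 0 := by
    simp only [hinn]
    refine Finset.sum_eq_zero fun e _ => if_neg (hs e)
  have hsum : (∑ v ∈ W, χ v * (out v - inn v)) = out s - inn s := by
    rcases Finset.decidableMem s W with hsW | hsW
    · -- s ∉ W
      rw [Finset.sum_eq_zero (fun v hv => hz v hv (fun h => hsW (by rwa [h] at hv)))]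
      have ho : out s = 0 := Finset.sum_eq_zero fun e _ =>
        if_neg (fun h => hsW (by rw [← h]; exact hsrcW e))
      rw [ho, hinn_s]; ring
    · rw [Finset.sum_eq_single_of_mem s hsW hz]
      simp [hχ, hsU]
  have hval : (flowValue src s Z : ℤ) = out s := by
    simp only [flowValue, hout]
    push_cast
    rfl
  rw [step1, step2, hsum, hval, hinn_s]
  ring

end Cut

section Width
variable {V E : Type} [Fintype E] [DecidableEq E] [DecidableEq V] {src tgt : E → V} {s t : V}

lemma width_cover (hb : 2 ≤ widthIn src tgt s t Set.univ) :
    ∃ P : Fin (widthIn src tgt s t Set.univ) → List E,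
      (∀ i, IsPath src tgt s t (P i)) ∧ ∀ e : E, ∃ i, e ∈ P i := by
  have hne : {k | ∃ P : Fin k → List E,
      (∀ i, IsPath src tgt s t (P i) ∧ ∀ e ∈ P i, e ∈ Set.univ) ∧
        ∀ e ∈ Set.univ, ∃ i, e ∈ P i}.Nonempty := by
    by_contra hc
    rw [Set.not_nonempty_iff_eq_empty] at hc
    have : widthIn src tgt s t Set.univ = 0 := by
      unfold widthIn; rw [hc]; exact Nat.sInf_empty
    omega
  obtain ⟨P, h1, h2⟩ := Nat.sInf_mem hne
  exact ⟨P, fun i => (h1 i).1, fun e => h2 e (Set.mem_univ e)⟩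

lemma s_ne_t (hdag : IsDAG src tgt) (hb : 2 ≤ widthIn src tgt s t Set.univ)
    [Nonempty E] : s ≠ t := by
  obtain ⟨P, h1, h2⟩ := width_cover hb
  obtain ⟨i, _⟩ := h2 (Classical.arbitrary E)
  intro hst
  refine hdag s (P i) (h1 i).1 ?_
  have := (h1 i).2
  rwa [← hst] at this

lemma width_supp_le (hstable : WidthStable src tgt s t)
    (hb : 2 ≤ widthIn src tgt s t Set.univ)
    {Z : E → ℕ} (hZ : IsFlowN src tgt s t Z) :
    widthIn src tgt s t {e | Z e ≠ 0} ≤ widthIn src tgt s t Set.univ := by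
  obtain ⟨Q, hQ1, hQ2⟩ := width_cover hb
  set cov : E → ℕ := fun f => ∑ i, (Q i).count f with hcov
  have hcovpos : ∀ f, 0 < cov f := by
    intro f
    obtain ⟨i, hi⟩ := hQ2 f
    have h1 : 0 < (Q i).count f := List.count_pos_iff.mpr hi
    exact h1.trans_le (Finset.single_le_sum (f := fun i => (Q i).count f)
      (fun i _ => Nat.zero_le _) (Finset.mem_univ i))
  have hcovflow : IsFlowN src tgt s t cov :=
    flow_counts (fun i _ => (hQ1 i).2)
  have hY : IsFlowN src tgt s t (fun e => Z e + cov e) := flow_add hZ hcovflow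
  have := hstable Z _ hZ hY (fun e => Nat.le_add_right _ _)
  have hYuniv : {e | Z e + cov e ≠ 0} = Set.univ :=
    Set.eq_univ_of_forall fun e => by
      have := hcovpos e; simp only [Set.mem_setOf_eq]; omega
  rwa [hYuniv] at this

lemma stay_all {TT : V → Prop} {a b : V} {L : List E} (hW : IsWalk src tgt a b L)
    (hstay : ∀ f ∈ L, TT (src f) → TT (tgt f)) (ha : TT a) :
    ∀ f ∈ L, TT (src f) := by
  induction L generalizing a with
  | nil => simp
  | cons f L ih =>
    obtain ⟨hsrc, hw⟩ := hW
    intro g hg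
    rcases List.mem_cons.mp hg with h | h
    · subst h; rwa [hsrc]
    · exact ih hw (fun f hf => hstay f (List.mem_cons_of_mem _ hf))
        (hstay f List.mem_cons_self (by rwa [hsrc])) g h

lemma cross_unique {TT : V → Prop} {a : V} {L : List E} (hW : IsWalk src tgt a t L)
    (hstay : ∀ f ∈ L, TT (src f) → TT (tgt f)) {e₁ e₂ : E}
    (h1 : e₁ ∈ L) (h2 : e₂ ∈ L)
    (hc1 : ¬ TT (src e₁) ∧ TT (tgt e₁)) (hc2 : ¬ TT (src e₂) ∧ TT (tgt e₂)) :
    e₁ = e₂ := by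
  induction L generalizing a with
  | nil => simp at h1
  | cons f L ih =>
    obtain ⟨hsrc, hw⟩ := hW
    by_cases hf : TT (tgt f)
    · have hall := stay_all hw (fun g hg => hstay g (List.mem_cons_of_mem _ hg)) hf
      have he1 : e₁ = f := by
        rcases List.mem_cons.mp h1 with h | h
        · exact h
        · exact absurd (hall e₁ h) hc1.1
      have he2 : e₂ = f := by
        rcases List.mem_cons.mp h2 with h | h
        · exact h
        · exact absurd (hall e₂ h) hc2.1
      rw [he1, he2]
    · have he1 : e₁ ∈ L := by
        rcases List.mem_cons.mp h1 with h | h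
        · exact absurd (h ▸ hc1.2) hf
        · exact h
      have he2 : e₂ ∈ L := by
        rcases List.mem_cons.mp h2 with h | h
        · exact absurd (h ▸ hc2.2) hf
        · exact h
      exact ih hw (fun g hg => hstay g (List.mem_cons_of_mem _ hg)) he1 he2

end Width

section Heavy
variable {V E : Type} [Fintype E] [DecidableEq E] [DecidableEq V] {src tgt : E → V} {s t : V}

lemma ceil_div_bounds {M b : ℕ} (hM : 1 ≤ M) (hb : 0 < b) :
    M ≤ b * ((M + b - 1) / b) ∧ b * ((M + b - 1) / b - 1) < M ∧ 1 ≤ (M + b - 1) / b := by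
  set lam := (M + b - 1) / b with hlamdef
  have hdm := Nat.div_add_mod (M + b - 1) b
  have hmod := Nat.mod_lt (M + b - 1) hb
  have hlam1 : 1 ≤ lam := by
    rw [hlamdef, Nat.le_div_iff_mul_le hb]
    omega
  have e1 : b * (lam - 1 + 1) = b * lam := by
    rw [show lam - 1 + 1 = lam from by omega]
  rw [Nat.mul_succ] at e1
  rw [← hlamdef] at hdm
  set q1 := b * lam with hq1
  set q2 := b * (lam - 1) with hq2
  omega

lemma heavy_path (hdag : IsDAG src tgt) (hs : ∀ e, tgt e ≠ s) (ht : ∀ e, src e ≠ t)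
    (hstable : WidthStable src tgt s t) (hb : 2 ≤ widthIn src tgt s t Set.univ)
    (hst : s ≠ t) {Z : E → ℕ} (hZ : IsFlowN src tgt s t Z) {e₀ : E} (hZ0 : Z e₀ ≠ 0) :
    ∃ (L : List E) (lam : ℕ), IsPath src tgt s t L ∧ (∀ e ∈ L, lam ≤ Z e) ∧
      flowValue src s Z ≤ widthIn src tgt s t Set.univ * lam := by
  classical
  set b := widthIn src tgt s t Set.univ with hbdef
  set M := flowValue src s Z with hMdef
  have hM1 : 1 ≤ M := flowValue_pos hdag hs ht hZ hZ0
  obtain ⟨hble, hlow, hlam1⟩ := ceil_div_bounds hM1 (by omega : 0 < b)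
  set lam := (M + b - 1) / b with hlamdef
  suffices hex : ∃ L, IsPath src tgt s t L ∧ ∀ e ∈ L, lam ≤ Z e by
    obtain ⟨L, h1, h2⟩ := hex
    exact ⟨L, lam, h1, h2, hble⟩
  by_contra hno
  push_neg at hno
  -- S0 : heavy-reachable from s
  set S0 : V → Prop := fun v => ∃ L, IsWalk src tgt s v L ∧ ∀ e ∈ L, lam ≤ Z e with hS0def
  set TT : V → Prop := fun v => ¬ S0 v ∧ ∃ L, IsWalk src tgt v t L ∧
      ∀ e ∈ L, 0 < Z e ∧ ¬ S0 (src e) ∧ ¬ S0 (tgt e) with hTTdef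
  have hS0s : S0 s := ⟨[], rfl, by simp⟩
  have hS0t : ¬ S0 t := by
    rintro ⟨L, hw, hh⟩
    cases L with
    | nil => exact hst hw
    | cons f L' =>
      obtain ⟨g, hg, hlt⟩ := hno (f :: L') ⟨by simp, hw⟩
      have := hh g hg
      omega
  have hTt : TT t := ⟨hS0t, [], rfl, by simp⟩
  have hTs : ¬ TT s := fun h => h.1 hS0s
  set U : V → Prop := fun v => ¬ TT v with hUdef
  have hcut := cut_value hs hZ U hTs (not_not_intro hTt)
  set C : Finset E := Finset.univ.filter
      (fun e => ¬ TT (src e) ∧ TT (tgt e) ∧ 0 < Z e) with hCdef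
  have hmemC : ∀ e, e ∈ C ↔ (¬ TT (src e) ∧ TT (tgt e) ∧ 0 < Z e) := by
    intro e; simp [hCdef]
  -- the crossing sum dominates M
  have hcross : (M : ℤ) ≤ ∑ e ∈ C, (Z e : ℤ) := by
    have hin : (0:ℤ) ≤ ∑ e, if ¬ U (src e) ∧ U (tgt e) then (Z e : ℤ) else 0 :=
      Finset.sum_nonneg fun e _ => by split_ifs <;> positivity
    have hout : (∑ e, if U (src e) ∧ ¬ U (tgt e) then (Z e : ℤ) else 0)
        = ∑ e ∈ C, (Z e : ℤ) := by
      have h1 : ∀ e : E, (if U (src e) ∧ ¬ U (tgt e) then (Z e : ℤ) else 0)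
          = if e ∈ C then (Z e : ℤ) else 0 := by
        intro e
        by_cases hz : Z e = 0
        · simp [hz]
        · have hz' : 0 < Z e := Nat.pos_of_ne_zero hz
          simp only [hmemC, hUdef, not_not]
          split_ifs with h1 h2 h2
          · rfl
          · exact absurd (show ¬ TT (src e) ∧ TT (tgt e) ∧ 0 < Z e from
              ⟨h1.1, h1.2, hz'⟩) h2
          · exact absurd (show ¬ TT (src e) ∧ TT (tgt e) from ⟨h2.1, h2.2.1⟩) h1
          · rfl
      rw [Finset.sum_congr rfl fun e _ => h1 e]
      rw [Finset.sum_ite_mem, Finset.univ_inter]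
    rw [hout] at hcut
    omega
  -- crossing edges are light
  have hlight : ∀ e ∈ C, Z e < lam := by
    intro e he
    rw [hmemC] at he
    obtain ⟨hnTs, hTt', hzpos⟩ := he
    by_contra hge
    push_neg at hge
    by_cases h0 : S0 (src e)
    · obtain ⟨L1, hw1, hh1⟩ := h0
      apply hTt'.1
      show ∃ L, IsWalk src tgt s (tgt e) L ∧ ∀ f ∈ L, lam ≤ Z f
      refine ⟨L1 ++ [e], hw1.append ⟨rfl, rfl⟩, ?_⟩
      intro f hf
      rcases List.mem_append.mp hf with h | h
      · exact hh1 f h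
      · rw [List.mem_singleton.mp h]; exact hge
    · obtain ⟨hnS0tgt, L2, hw2, hp2⟩ := hTt'
      apply hnTs
      show ¬ S0 (src e) ∧ ∃ L, IsWalk src tgt (src e) t L ∧
        ∀ f ∈ L, 0 < Z f ∧ ¬ S0 (src f) ∧ ¬ S0 (tgt f)
      refine ⟨h0, e :: L2, ⟨rfl, hw2⟩, ?_⟩
      intro f hf
      rcases List.mem_cons.mp hf with h | h
      · subst h; exact ⟨hzpos, h0, hnS0tgt⟩
      · exact hp2 f h
  -- |C| > b
  have hCb : b < C.card := by
    by_contra hle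
    push_neg at hle
    have h1 : (∑ e ∈ C, (Z e : ℤ)) ≤ C.card • ((lam : ℤ) - 1) :=
      Finset.sum_le_card_nsmul C _ _ (fun e he => by
        have := hlight e he; push_cast; omega)
    rw [nsmul_eq_mul] at h1
    have h2 : (C.card : ℤ) * ((lam:ℤ) - 1) ≤ (b : ℤ) * ((lam:ℤ) - 1) := by
      apply mul_le_mul_of_nonneg_right
      · exact_mod_cast hle
      · have : 1 ≤ lam := hlam1; push_cast; omega
    have h3 : (b:ℤ) * ((lam:ℤ) - 1) = ((b * (lam - 1) : ℕ) : ℤ) := by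
      rw [Nat.cast_mul, Nat.cast_sub hlam1, Nat.cast_one]
    have h4 : ((b * (lam - 1) : ℕ) : ℤ) < (M:ℤ) := by exact_mod_cast hlow
    omega
  -- sources of crossing edges are heavy-reachable
  have hsrcS0 : ∀ e ∈ C, S0 (src e) := by
    intro e he
    rw [hmemC] at he
    obtain ⟨hnTs, hTt', hzpos⟩ := he
    by_contra h0
    obtain ⟨hnS0tgt, L2, hw2, hp2⟩ := hTt'
    apply hnTs
    show ¬ S0 (src e) ∧ ∃ L, IsWalk src tgt (src e) t L ∧
      ∀ f ∈ L, 0 < Z f ∧ ¬ S0 (src f) ∧ ¬ S0 (tgt f)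
    refine ⟨h0, e :: L2, ⟨rfl, hw2⟩, ?_⟩
    intro f hf
    rcases List.mem_cons.mp hf with h | h
    · subst h; exact ⟨hzpos, h0, hnS0tgt⟩
    · exact hp2 f h
  -- a good s-t walk through each crossing edge
  have hr : ∀ e, ∃ L : List E, e ∈ C → IsWalk src tgt s t L ∧ e ∈ L ∧
      (∀ f ∈ L, 0 < Z f ∧ (TT (src f) → TT (tgt f))) := by
    intro e
    by_cases he : e ∈ C
    · obtain ⟨L1, hw1, hh1⟩ := hsrcS0 e he
      have he' := (hmemC e).mp he
      obtain ⟨hnS0tgt, L2, hw2, hp2⟩ := he'.2.1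
      refine ⟨L1 ++ e :: L2, fun _ => ⟨hw1.append ⟨rfl, hw2⟩,
        List.mem_append_right _ List.mem_cons_self, ?_⟩⟩
      intro f hf
      rcases List.mem_append.mp hf with h | h
      · refine ⟨lt_of_lt_of_le (by omega) (hh1 f h), fun hTTf => ?_⟩
        exfalso
        apply hTTf.1
        obtain ⟨l1, l2, hL1⟩ := List.append_of_mem h
        show ∃ L, IsWalk src tgt s (src f) L ∧ ∀ g ∈ L, lam ≤ Z g
        refine ⟨l1, (isWalk_split (hL1 ▸ hw1)).1, fun g hg => ?_⟩
        exact hh1 g (hL1 ▸ List.mem_append_left _ hg)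
      · rcases List.mem_cons.mp h with h' | h'
        · subst h'
          exact ⟨he'.2.2, fun hTTf => absurd hTTf he'.1⟩
        · refine ⟨(hp2 f h').1, fun _ => ?_⟩
          obtain ⟨l1, l2, hL2⟩ := List.append_of_mem h'
          show ¬ S0 (tgt f) ∧ ∃ L, IsWalk src tgt (tgt f) t L ∧
            ∀ g ∈ L, 0 < Z g ∧ ¬ S0 (src g) ∧ ¬ S0 (tgt g)
          refine ⟨(hp2 f h').2.2, l2, (isWalk_split (hL2 ▸ hw2)).2, fun g hg => ?_⟩
          exact hp2 g (hL2 ▸ List.mem_append_right _ (List.mem_cons_of_mem _ hg))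
    · exact ⟨[], fun h => absurd h he⟩
  set r : E → List E := fun e => (hr e).choose with hrdef
  have hrspec : ∀ e ∈ C, IsWalk src tgt s t (r e) ∧ e ∈ r e ∧
      (∀ f ∈ r e, 0 < Z f ∧ (TT (src f) → TT (tgt f))) :=
    fun e he => (hr e).choose_spec he
  set A : E → ℕ := fun f => ∑ e ∈ C, (r e).count f with hAdef
  have hAflow : IsFlowN src tgt s t A := flow_counts (fun e he => (hrspec e he).1)
  have hApos : ∀ e ∈ C, A e ≠ 0 := by
    intro e he
    have h1 : 0 < (r e).count e := List.count_pos_iff.mpr (hrspec e he).2.1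
    have h2 : (r e).count e ≤ ∑ e' ∈ C, (r e').count e :=
      Finset.single_le_sum (f := fun e' => (r e').count e)
        (fun e' _ => Nat.zero_le _) he
    show (∑ e' ∈ C, (r e').count e) ≠ 0
    omega
  have hmemA : ∀ f e, e ∈ C → f ∈ r e → A f ≠ 0 := by
    intro f e he hf
    have h1 : 0 < (r e).count f := List.count_pos_iff.mpr hf
    have h2 : (r e).count f ≤ ∑ e' ∈ C, (r e').count f :=
      Finset.single_le_sum (f := fun e' => (r e').count f)
        (fun e' _ => Nat.zero_le _) he
    show (∑ e' ∈ C, (r e').count f) ≠ 0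
    omega
  have hAsupp : ∀ f, A f ≠ 0 → 0 < Z f ∧ (TT (src f) → TT (tgt f)) := by
    intro f hf
    have : ∃ e ∈ C, (r e).count f ≠ 0 := by
      by_contra hc
      push_neg at hc
      exact hf (Finset.sum_eq_zero hc)
    obtain ⟨e, he, hcount⟩ := this
    exact (hrspec e he).2.2 f (List.count_pos_iff.mp (Nat.pos_of_ne_zero hcount))
  -- stability chain
  set M' : ℕ := (∑ e ∈ C, (r e).length) + 1 with hM'def
  have hAle : ∀ f, A f ≤ M' * Z f := by
    intro f
    by_cases hz : Z f = 0
    · by_cases hA : A f = 0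
      · simp [hA]
      · exact absurd hz (by have := (hAsupp f hA).1; omega)
    · have h1 : A f ≤ M' := by
        have : ∀ e ∈ C, (r e).count f ≤ (r e).length :=
          fun e _ => List.count_le_length
        have := Finset.sum_le_sum this
        simp only [hAdef, hM'def] at *
        omega
      calc A f ≤ M' := h1
        _ = M' * 1 := (mul_one _).symm
        _ ≤ M' * Z f := Nat.mul_le_mul_left _ (Nat.pos_of_ne_zero hz)
  have hstab1 := hstable A (fun e => M' * Z e) hAflow (flow_smul hZ M') hAle
  have hsupp_eq : {e | M' * Z e ≠ 0} = {e | Z e ≠ 0} := by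
    ext e; simp [hM'def, Nat.mul_ne_zero_iff]
  rw [hsupp_eq] at hstab1
  have hstab2 := width_supp_le hstable hb hZ
  have hwk : widthIn src tgt s t {e | A e ≠ 0} ≤ b := le_trans hstab1 hstab2
  -- lower bound on the width of supp A
  set SA : Set E := {e | A e ≠ 0} with hSAdef
  have hSAne : {k | ∃ P : Fin k → List E,
      (∀ i, IsPath src tgt s t (P i) ∧ ∀ e ∈ P i, e ∈ SA) ∧
        ∀ e ∈ SA, ∃ i, e ∈ P i}.Nonempty := by
    refine ⟨C.card, fun i => r ((C.equivFin.symm i) : E), fun i => ?_, fun f hf => ?_⟩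
    · have he := (C.equivFin.symm i).2
      exact ⟨⟨List.ne_nil_of_mem (hrspec _ he).2.1, (hrspec _ he).1⟩,
        fun f hf => hmemA f _ he hf⟩
    · have hex2 : ∃ e ∈ C, (r e).count f ≠ 0 := by
        by_contra hc
        push_neg at hc
        exact hf (Finset.sum_eq_zero hc)
      obtain ⟨e, he, hcount⟩ := hex2
      refine ⟨C.equivFin ⟨e, he⟩, ?_⟩
      show f ∈ r ((C.equivFin.symm (C.equivFin ⟨e, he⟩)) : E)
      rw [Equiv.symm_apply_apply]
      exact List.count_pos_iff.mp (Nat.pos_of_ne_zero hcount)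
  have hkmem := Nat.sInf_mem hSAne
  set k : ℕ := widthIn src tgt s t SA with hkdef
  obtain ⟨P1, hP1, hP1cov⟩ : ∃ P : Fin k → List E,
      (∀ i, IsPath src tgt s t (P i) ∧ ∀ e ∈ P i, e ∈ SA) ∧
        ∀ e ∈ SA, ∃ i, e ∈ P i := hkmem
  have hCA : ∀ e ∈ C, e ∈ SA := fun e he => hApos e he
  rcases Nat.eq_zero_or_pos k with hk0 | hkpos
  · obtain ⟨e, he⟩ := Finset.card_pos.mp (by omega : 0 < C.card)
    obtain ⟨i, _⟩ := hP1cov e (hCA e he)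
    have := i.isLt
    omega
  · set φ : E → Fin k := fun e =>
      if he : e ∈ SA then (hP1cov e he).choose else ⟨0, hkpos⟩ with hφdef
    have hφmem : ∀ e ∈ C, e ∈ P1 (φ e) := by
      intro e he
      simp only [hφdef]
      rw [dif_pos (hCA e he)]
      exact (hP1cov e (hCA e he)).choose_spec
    have hinj : Set.InjOn φ C := by
      intro e1 he1 e2 he2 hEq
      have h1 := hφmem e1 he1
      have h2 := hφmem e2 he2
      rw [hEq] at h1
      have hC1 := (hmemC e1).mp he1
      have hC2 := (hmemC e2).mp he2
      refine cross_unique (TT := TT) (hP1 (φ e2)).1.2 ?_ h1 h2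
        ⟨hC1.1, hC1.2.1⟩ ⟨hC2.1, hC2.2.1⟩
      intro f hf
      exact (hAsupp f ((hP1 (φ e2)).2 f hf)).2
    have hcard : C.card ≤ k := by
      have := Finset.card_le_card_of_injOn φ
        (fun e he => Finset.mem_univ (φ e)) hinj
      simpa using this
    omega

end Heavy


/-- On a width-stable `s`-`t` DAG of width `b ≥ 2`, any run of the greedy-weight
algorithm (repeatedly subtracting a heaviest `s`-`t` path with its maximum carryable
weight) reaches the zero flow after at most `⌊log |X| / log (b/(b-1))⌋ + 1` steps. -/
theorem stmt_6 {V E : Type} [Fintype E] [DecidableEq V] [DecidableEq E]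
    (src tgt : E → V) (s t : V)
    (hdag : IsDAG src tgt) (hs : ∀ e, tgt e ≠ s) (ht : ∀ e, src e ≠ t)
    (hstable : WidthStable src tgt s t)
    (hb : 2 ≤ widthIn src tgt s t Set.univ)
    (X : E → ℕ) (hflow : IsFlowN src tgt s t X)
    (seq : ℕ → E → ℕ) (P : ℕ → List E) (w : ℕ → ℕ)
    (h0 : seq 0 = X)
    (hstep : ∀ j,
      (seq j ≠ 0 →
        IsPath src tgt s t (P j) ∧
        (∀ e ∈ P j, w j ≤ seq j e) ∧
        (∀ (L : List E) (w' : ℕ), IsPath src tgt s t L → (∀ e ∈ L, w' ≤ seq j e) →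
          w' ≤ w j) ∧
        (∀ e, seq (j + 1) e = seq j e - (if e ∈ P j then w j else 0))) ∧
      (seq j = 0 → seq (j + 1) = 0)) :
    seq (Nat.floor (Real.log (flowValue src s X) /
          Real.log ((widthIn src tgt s t Set.univ : ℝ) /
            ((widthIn src tgt s t Set.univ : ℝ) - 1))) + 1) = 0 := by
  classical
  set b := widthIn src tgt s t Set.univ with hbdef
  set N := Nat.floor (Real.log (flowValue src s X) /
      Real.log ((b : ℝ) / ((b : ℝ) - 1))) + 1 with hNdef
  by_contra hne
  -- all iterates are flows
  have hflows : ∀ j, IsFlowN src tgt s t (seq j) := by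
    intro j
    induction j with
    | zero => rw [h0]; exact hflow
    | succ j ih =>
      by_cases hz : seq j = 0
      · rw [(hstep j).2 hz]
        intro v _ _
        simp
      · obtain ⟨hpath, hcarry, hmax, hupd⟩ := (hstep j).1 hz
        have hnd : (P j).Nodup := hpath.2.nodup hdag
        have hfun : seq (j+1) = fun e => seq j e - if e ∈ P j then w j else 0 :=
          funext hupd
        rw [hfun]
        exact flow_sub_path ih hnd hpath.2 hcarry
  -- zero is absorbing
  have habs : ∀ j m, seq j = 0 → seq (j + m) = 0 := by
    intro j m h
    induction m with
    | zero => exact h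
    | succ m ih => exact (hstep (j + m)).2 ih
  have hnz : ∀ j, j ≤ N → seq j ≠ 0 := by
    intro j hj h
    exact hne (by rw [show N = j + (N - j) from by omega]; exact habs j (N - j) h)
  -- E is nonempty, s ≠ t
  obtain ⟨eN, heN⟩ := Function.ne_iff.mp hne
  haveI : Nonempty E := ⟨eN⟩
  have hst : s ≠ t := s_ne_t hdag hb
  -- decay step
  have hdec : ∀ j, seq j ≠ 0 →
      b * flowValue src s (seq (j+1)) ≤ (b - 1) * flowValue src s (seq j) := by
    intro j hz
    obtain ⟨hpath, hcarry, hmax, hupd⟩ := (hstep j).1 hz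
    have hnd : (P j).Nodup := hpath.2.nodup hdag
    obtain ⟨e₀, he₀⟩ := Function.ne_iff.mp hz
    obtain ⟨L, lam, hL, hcarryL, hval⟩ :=
      heavy_path hdag hs ht hstable hb hst (hflows j) he₀
    have hlam : lam ≤ w j := hmax L lam hL hcarryL
    have hfun : seq (j+1) = fun e => seq j e - if e ∈ P j then w j else 0 :=
      funext hupd
    obtain ⟨hveq, hwle⟩ := flow_sub_path_value (Z := seq j) hs hnd hpath.1 hpath.2 hcarry
    rw [hfun, hveq]
    have h1 : flowValue src s (seq j) ≤ b * w j :=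
      le_trans hval (Nat.mul_le_mul_left b hlam)
    zify [hwle, (show 1 ≤ b by omega)]
    have h2 : (flowValue src s (seq j) : ℤ) ≤ (b : ℤ) * (w j : ℤ) := by exact_mod_cast h1
    have h3 : (1 : ℤ) ≤ (b : ℤ) := by
      have : 2 ≤ b := hb
      omega
    nlinarith [h2, h3]
  -- iterate
  have hiter : ∀ j, j ≤ N →
      b ^ j * flowValue src s (seq j) ≤ (b - 1) ^ j * flowValue src s (seq 0) := by
    intro j
    induction j with
    | zero => simp
    | succ j ih =>
      intro hj
      have hih := ih (by omega)
      have hd := hdec j (hnz j (by omega))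
      calc b ^ (j+1) * flowValue src s (seq (j+1))
          = b ^ j * (b * flowValue src s (seq (j+1))) := by ring
        _ ≤ b ^ j * ((b - 1) * flowValue src s (seq j)) :=
            Nat.mul_le_mul_left _ hd
        _ = (b - 1) * (b ^ j * flowValue src s (seq j)) := by ring
        _ ≤ (b - 1) * ((b - 1) ^ j * flowValue src s (seq 0)) :=
            Nat.mul_le_mul_left _ hih
        _ = (b - 1) ^ (j+1) * flowValue src s (seq 0) := by ring
  -- final numeric contradiction
  have hvN : 1 ≤ flowValue src s (seq N) :=
    flowValue_pos hdag hs ht (hflows N) heN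
  have hM1 : 1 ≤ flowValue src s X := by
    rw [← h0]
    obtain ⟨e1, he1⟩ := Function.ne_iff.mp (hnz 0 (by omega))
    exact flowValue_pos hdag hs ht (hflows 0) he1
  set M := flowValue src s X with hMdef
  have hkey : b ^ N ≤ (b - 1) ^ N * M := by
    have := hiter N le_rfl
    rw [h0, ← hMdef] at this
    calc b ^ N = b ^ N * 1 := (mul_one _).symm
      _ ≤ b ^ N * flowValue src s (seq N) := Nat.mul_le_mul_left _ hvN
      _ ≤ (b - 1) ^ N * M := this
  -- move to the reals
  have hb2 : (2 : ℝ) ≤ (b : ℝ) := by exact_mod_cast hb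
  have hbm1 : (0 : ℝ) < (b : ℝ) - 1 := by linarith
  have hcast : ((b : ℝ)) ^ N ≤ ((b : ℝ) - 1) ^ N * (M : ℝ) := by
    have h1 : ((b ^ N : ℕ) : ℝ) ≤ (((b - 1) ^ N * M : ℕ) : ℝ) := by exact_mod_cast hkey
    push_cast at h1
    rw [Nat.cast_sub (by omega : 1 ≤ b), Nat.cast_one] at h1
    exact h1
  have hr1 : (1 : ℝ) < (b : ℝ) / ((b : ℝ) - 1) := by
    rw [lt_div_iff₀ hbm1]
    linarith
  have hpow : ((b : ℝ) / ((b : ℝ) - 1)) ^ N ≤ (M : ℝ) := by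
    rw [div_pow, div_le_iff₀ (by positivity)]
    linarith [hcast]
  have hlogr : 0 < Real.log ((b : ℝ) / ((b : ℝ) - 1)) := Real.log_pos hr1
  have hlog : (N : ℝ) * Real.log ((b : ℝ) / ((b : ℝ) - 1)) ≤ Real.log (M : ℝ) := by
    have h1 := Real.log_le_log (by positivity) hpow
    rwa [Real.log_pow] at h1
  have hfin : (N : ℝ) ≤ Real.log (M : ℝ) / Real.log ((b : ℝ) / ((b : ℝ) - 1)) :=
    (le_div_iff₀ hlogr).mpr hlog
  have := Nat.le_floor hfin
  omega
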